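/- For all fixed real numbers a, b, c, the expression 2·k²·(cosh(c/k) − cosh(a/k)·cosh(b/k)) tends to c² − a² − b² as k → ∞. In particular, if cosh(c/k) = cosh(a/k)·cosh(b/k) holds for all k in a sequence tending to infinity, then c² = a² + b². -/
import Mathlib


open Filter

/-- Key limit: `k² (cosh (x/k) - 1) → x²/2` as `k → ∞`. -/
lemma bolyai_cosh_limit (x : ℝ) :
    Tendsto (fun k : ℝ => k ^ 2 * (Real.cosh (x / k) - 1)) atTop
      (nhds (x ^ 2 / 2)) := by
  rcases eq_or_ne x 0 with rfl | hx
  · simpa using tendsto_const_nhds (α := ℝ) (x := (0:ℝ)) (f := atTop)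
  · have hslope : Tendsto (fun u : ℝ => Real.sinh u / u) (nhdsWithin 0 {(0:ℝ)}ᶜ)
        (nhds 1) := by
      have := (Real.hasDerivAt_sinh 0)
      rw [hasDerivAt_iff_tendsto_slope] at this
      simp only [Real.cosh_zero] at this
      refine this.congr' ?_
      filter_upwards [self_mem_nhdsWithin] with u hu
      simp [slope_def_field, div_eq_mul_inv, mul_comm]
    have hh : Tendsto (fun u : ℝ => x ^ 2 / 2 * (Real.sinh u / u) ^ 2)
        (nhdsWithin 0 {(0:ℝ)}ᶜ) (nhds (x ^ 2 / 2)) := by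
      have := ((hslope.pow 2).const_mul (x ^ 2 / 2))
      simpa using this
    have hcomp : Tendsto (fun k : ℝ => x / (2 * k)) atTop
        (nhdsWithin 0 {(0:ℝ)}ᶜ) := by
      apply tendsto_nhdsWithin_of_tendsto_nhds_of_eventually_within
      · exact tendsto_const_nhds.div_atTop (tendsto_id.const_mul_atTop two_pos)
      · filter_upwards [eventually_gt_atTop (0:ℝ)] with k hk
        simp [div_eq_zero_iff, hx, hk.ne', Set.mem_compl_iff]
    have := hh.comp hcomp
    refine this.congr' ?_
    filter_upwards [eventually_gt_atTop (0:ℝ)] with k hk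
    have hk0 : k ≠ 0 := hk.ne'
    have hdouble : Real.cosh (x / k) = 2 * Real.sinh (x / (2 * k)) ^ 2 + 1 := by
      have h2 : x / k = x / (2 * k) + x / (2 * k) := by field_simp; ring
      rw [h2, Real.cosh_add]
      linear_combination Real.cosh_sq (x / (2 * k))
    simp only [Function.comp]
    rw [hdouble]
    field_simp
    ring

/-- Bolyai §32 (VII): the hyperbolic Pythagorean theorem degenerates into the
Euclidean one as `k → ∞`: `2k²(cosh(c/k) − cosh(a/k)·cosh(b/k)) → c² − a² − b²`;
in particular, if the hyperbolic relation holds along a sequence of `k`'s tending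
to infinity, then `c² = a² + b²`. -/
theorem bolyai_pythagoras_euclidean_limit (a b c : ℝ) :
    Tendsto (fun k : ℝ =>
        2 * k ^ 2 * (Real.cosh (c / k) - Real.cosh (a / k) * Real.cosh (b / k)))
      atTop (nhds (c ^ 2 - a ^ 2 - b ^ 2)) ∧
    (∀ s : ℕ → ℝ, Tendsto s atTop atTop →
      (∀ n, Real.cosh (c / s n) = Real.cosh (a / s n) * Real.cosh (b / s n)) →
      c ^ 2 = a ^ 2 + b ^ 2) := by
  have hmain : Tendsto (fun k : ℝ =>
      2 * k ^ 2 * (Real.cosh (c / k) - Real.cosh (a / k) * Real.cosh (b / k)))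
      atTop (nhds (c ^ 2 - a ^ 2 - b ^ 2)) := by
    have h1 := bolyai_cosh_limit c
    have h2 := bolyai_cosh_limit (a + b)
    have h3 := bolyai_cosh_limit (a - b)
    have hcomb := ((h1.const_mul 2).sub h2).sub h3
    have heq : ∀ k : ℝ,
        2 * (k ^ 2 * (Real.cosh (c / k) - 1)) -
          k ^ 2 * (Real.cosh ((a + b) / k) - 1) -
          k ^ 2 * (Real.cosh ((a - b) / k) - 1) =
        2 * k ^ 2 * (Real.cosh (c / k) - Real.cosh (a / k) * Real.cosh (b / k)) := by
      intro k
      have hab : (a + b) / k = a / k + b / k := add_div a b k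
      have hab' : (a - b) / k = a / k - b / k := sub_div a b k
      rw [hab, hab', Real.cosh_add, Real.cosh_sub]
      ring
    have hval : 2 * (c ^ 2 / 2) - (a + b) ^ 2 / 2 - (a - b) ^ 2 / 2
        = c ^ 2 - a ^ 2 - b ^ 2 := by ring
    rw [hval] at hcomb
    exact hcomb.congr heq
  refine ⟨hmain, fun s hs hrel => ?_⟩
  have hzero : Tendsto (fun n => 2 * (s n) ^ 2 *
      (Real.cosh (c / s n) - Real.cosh (a / s n) * Real.cosh (b / s n)))
      atTop (nhds 0) := by
    have : ∀ n, 2 * (s n) ^ 2 *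
        (Real.cosh (c / s n) - Real.cosh (a / s n) * Real.cosh (b / s n)) = 0 := by
      intro n; rw [hrel n]; ring
    simpa [this] using tendsto_const_nhds (α := ℝ) (x := (0:ℝ)) (f := atTop)
  have hseq := hmain.comp hs
  have := tendsto_nhds_unique hseq hzero
  linarith
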